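/- Let D=(V,A) be a digraph with minimum dicut size τ whose underlying undirected graph G admits a nowhere-zero circular k-flow (k ≥ 2 rational). Let G⃗ have arcs A ∪ A⁻¹ with weights w^D (τ on A, 1 on A⁻¹). Then there exists an integral vector x with 0 ≤ x ≤ w^D such that both x and w^D − x are ⌊τ/k⌋-strongly-connected: for every nonempty proper U⊆V, x(δ⁺(U)) ≥ ⌊τ/k⌋ and (w^D−x)(δ⁺(U)) ≥ ⌊τ/k⌋. -/

import Mathlib

open Finset

variable {V A : Type*} [Fintype V] [DecidableEq V] [Fintype A] [DecidableEq A]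

/-- The arcs leaving the vertex set `U`. -/
def outArcs (src tgt : A → V) (U : Finset V) : Finset A :=
  univ.filter fun a => src a ∈ U ∧ tgt a ∉ U

/-- The arcs entering the vertex set `U`. -/
def inArcs (src tgt : A → V) (U : Finset V) : Finset A :=
  univ.filter fun a => tgt a ∈ U ∧ src a ∉ U

/-- `U` induces a dicut: nonempty, proper, no entering arcs (the dicut is `outArcs U`). -/
def IsDicut (src tgt : A → V) (U : Finset V) : Prop :=
  U.Nonempty ∧ U ≠ univ ∧ inArcs src tgt U = ∅

/-- A dijoin: an arc set meeting every dicut. -/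
def IsDijoin (src tgt : A → V) (J : Finset A) : Prop :=
  ∀ U : Finset V, IsDicut src tgt U → (outArcs src tgt U ∩ J).Nonempty

/-- Tail of an arc under the orientation `o` of the underlying undirected graph. -/
def otail (src tgt : A → V) (o : A → Bool) (a : A) : V := if o a then src a else tgt a

/-- Head of an arc under the orientation `o` of the underlying undirected graph. -/
def ohead (src tgt : A → V) (o : A → Bool) (a : A) : V := if o a then tgt a else src a

/-- The underlying undirected graph admits a nowhere-zero circular `k`-flow: an orientation
`o` of the edges together with a circulation `f` with `1 ≤ f_e ≤ k - 1` everywhere. -/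
def HasNZCircularFlow (src tgt : A → V) (k : ℚ) : Prop :=
  ∃ (o : A → Bool) (f : A → ℚ),
    (∀ v : V, ∑ a ∈ univ.filter (fun a => otail src tgt o a = v), f a
            = ∑ a ∈ univ.filter (fun a => ohead src tgt o a = v), f a) ∧
    ∀ a : A, 1 ≤ f a ∧ f a ≤ k - 1

/-- Source of an arc in the augmented digraph `A × Bool` (`true` = original copy,
`false` = reversed copy). -/
def asrc (src tgt : A → V) (p : A × Bool) : V := if p.2 then src p.1 else tgt p.1

/-- Target of an arc in the augmented digraph. -/
def atgt (src tgt : A → V) (p : A × Bool) : V := if p.2 then tgt p.1 else src p.1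

set_option linter.unusedSectionVars false

lemma sum_outArcs_aug (src tgt : A → V) (U : Finset V) (g : A × Bool → ℤ) :
    ∑ p ∈ outArcs (asrc src tgt) (atgt src tgt) U, g p
    = ∑ a : A, ((if src a ∈ U ∧ tgt a ∉ U then g (a, true) else 0)
              + (if tgt a ∈ U ∧ src a ∉ U then g (a, false) else 0)) := by
  rw [outArcs, sum_filter, Fintype.sum_prod_type]
  refine Fintype.sum_congr _ _ fun a => ?_
  rw [Fintype.sum_bool]
  simp [asrc, atgt, add_comm]

lemma sum_fiber_mem (f : A → ℚ) (g : A → V) (U : Finset V) :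
    ∑ v ∈ U, ∑ a ∈ univ.filter (fun a => g a = v), f a
    = ∑ a ∈ univ.filter (fun a => g a ∈ U), f a := by
  calc ∑ v ∈ U, ∑ a ∈ univ.filter (fun a => g a = v), f a
      = ∑ v ∈ U, ∑ a : A, if g a = v then f a else 0 := by simp [sum_filter]
    _ = ∑ a : A, ∑ v ∈ U, if g a = v then f a else 0 := Finset.sum_comm
    _ = ∑ a : A, if g a ∈ U then f a else 0 := by
        refine Fintype.sum_congr _ _ fun a => ?_
        exact Finset.sum_ite_eq U (g a) (fun _ => f a)
    _ = _ := (sum_filter _ _).symm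

lemma flow_cut_balance (src tgt : A → V) (o : A → Bool) (f : A → ℚ)
    (hcons : ∀ v : V, ∑ a ∈ univ.filter (fun a => otail src tgt o a = v), f a
                    = ∑ a ∈ univ.filter (fun a => ohead src tgt o a = v), f a)
    (U : Finset V) :
    ∑ a ∈ univ.filter (fun a => otail src tgt o a ∈ U ∧ ohead src tgt o a ∉ U), f a
    = ∑ a ∈ univ.filter (fun a => ohead src tgt o a ∈ U ∧ otail src tgt o a ∉ U), f a := by
  have key : ∑ a ∈ univ.filter (fun a => otail src tgt o a ∈ U), f a
           = ∑ a ∈ univ.filter (fun a => ohead src tgt o a ∈ U), f a := by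
    rw [← sum_fiber_mem f (otail src tgt o) U, ← sum_fiber_mem f (ohead src tgt o) U]
    exact Finset.sum_congr rfl fun v _ => hcons v
  have split : ∀ g h : A → V,
      ∑ a ∈ univ.filter (fun a => g a ∈ U), f a
      = ∑ a ∈ univ.filter (fun a => g a ∈ U ∧ h a ∉ U), f a
        + ∑ a ∈ univ.filter (fun a => g a ∈ U ∧ h a ∈ U), f a := by
    intro g h
    rw [← Finset.sum_filter_add_sum_filter_not (univ.filter (fun a => g a ∈ U))
        (fun a => h a ∉ U), filter_filter, filter_filter]
    have e1 : (univ.filter fun a => g a ∈ U ∧ h a ∉ U)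
        = (univ.filter fun a => g a ∈ U ∧ h a ∉ U) := rfl
    have e2 : (univ.filter fun a => g a ∈ U ∧ ¬ h a ∉ U)
        = (univ.filter fun a => g a ∈ U ∧ h a ∈ U) := by
      ext a; simp
    rw [e2]
  have h1 := split (otail src tgt o) (ohead src tgt o)
  have h2 := split (ohead src tgt o) (otail src tgt o)
  have h3 : univ.filter (fun a => otail src tgt o a ∈ U ∧ ohead src tgt o a ∈ U)
          = univ.filter (fun a => ohead src tgt o a ∈ U ∧ otail src tgt o a ∈ U) := by
    ext a; simp; tauto
  rw [h1, h2, h3] at key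
  linarith

/-- If `D` has minimum dicut size `τ` and its underlying graph admits a nowhere-zero circular
`k`-flow, then the augmented weighted digraph (`τ` on original arcs, `1` on reverse arcs) can be
split as `x + (w - x)` with both parts `⌊τ/k⌋`-strongly-connected. -/
theorem decompose_augmented_into_two_scd (src tgt : A → V) (τ : ℕ) (k : ℚ) (hk : 2 ≤ k)
    (hmin : ∀ U : Finset V, IsDicut src tgt U → τ ≤ (outArcs src tgt U).card)
    (hflow : HasNZCircularFlow src tgt k) :
    ∃ x : A × Bool → ℤ,
      (∀ p : A × Bool, 0 ≤ x p ∧ x p ≤ (if p.2 then (τ : ℤ) else 1)) ∧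
      ∀ U : Finset V, U.Nonempty → U ≠ univ →
        ⌊(τ : ℚ) / k⌋ ≤ ∑ p ∈ outArcs (asrc src tgt) (atgt src tgt) U, x p ∧
        ⌊(τ : ℚ) / k⌋ ≤ ∑ p ∈ outArcs (asrc src tgt) (atgt src tgt) U,
            ((if p.2 then (τ : ℤ) else 1) - x p) := by
  classical
  obtain ⟨o, f, hcons, hbd⟩ := hflow
  have hk0 : (0:ℚ) < k := by linarith
  set x : A × Bool → ℤ := fun p =>
    if p.2 then (if o p.1 then ((τ:ℤ)+1)/2 else (τ:ℤ)/2)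
    else (if o p.1 then 0 else 1) with hxdef
  have hx : ∀ p : A × Bool, 0 ≤ x p ∧ x p ≤ (if p.2 then (τ : ℤ) else 1) := by
    rintro ⟨a, b⟩
    cases b <;> by_cases h : o a <;> simp [hxdef, h] <;> omega
  refine ⟨x, hx, fun U hU1 hU2 => ?_⟩
  by_cases hcross : ∃ a, src a ∈ U ∧ tgt a ∉ U
  · -- a forward arc crosses the cut: both sums are at least ⌊τ/2⌋
    obtain ⟨a0, ha1, ha2⟩ := hcross
    have hfloor2 : ⌊(τ:ℚ)/k⌋ ≤ (τ:ℤ)/2 := by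
      have h1 : (τ:ℚ)/k ≤ (τ:ℚ)/2 := by
        rw [div_le_div_iff₀ hk0 (by norm_num)]
        have : (0:ℚ) ≤ (τ:ℚ) := by positivity
        nlinarith
      calc ⌊(τ:ℚ)/k⌋ ≤ ⌊(τ:ℚ)/2⌋ := Int.floor_le_floor h1
        _ = (τ:ℤ)/2 := by
            rw [show ((τ:ℚ)) = (((τ:ℤ)):ℚ) by push_cast; ring,
              show ((2:ℚ)) = (((2:ℕ)):ℚ) by norm_num,
              Rat.floor_intCast_div_natCast]
            norm_num
    have hmem : (a0, true) ∈ outArcs (asrc src tgt) (atgt src tgt) U := by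
      rw [outArcs, mem_filter]; simp [asrc, atgt, ha1, ha2]
    constructor
    · have hs := Finset.single_le_sum (f := x) (fun p _ => (hx p).1) hmem
      have hv : (τ:ℤ)/2 ≤ x (a0, true) := by
        by_cases h : o a0 <;> simp [hxdef, h] <;> omega
      linarith
    · have hs := Finset.single_le_sum
        (f := fun p : A × Bool => (if p.2 then (τ:ℤ) else 1) - x p)
        (fun p _ => sub_nonneg.mpr (hx p).2) hmem
      have hv : (τ:ℤ)/2 ≤ (if (true:Bool) then (τ:ℤ) else 1) - x (a0, true) := by
        by_cases h : o a0 <;> simp [hxdef, h] <;> omega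
      simp only [if_true] at hv hs
      linarith
  · -- no forward arc crosses: the complement is a dicut
    push_neg at hcross
    set P : A → Prop := fun a => otail src tgt o a ∈ U ∧ ohead src tgt o a ∉ U with hP
    set Q : A → Prop := fun a => ohead src tgt o a ∈ U ∧ otail src tgt o a ∉ U with hQ
    set np := (univ.filter P).card with hnp
    set nq := (univ.filter Q).card with hnq
    -- the complement of U is a dicut
    have hdicut : IsDicut src tgt (univ \ U) := by
      refine ⟨?_, ?_, ?_⟩
      · obtain ⟨v, hv⟩ : ∃ v, v ∉ U := by
          by_contra h; push_neg at h; exact hU2 (eq_univ_iff_forall.mpr h)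
        exact ⟨v, mem_sdiff.mpr ⟨mem_univ v, hv⟩⟩
      · intro h
        obtain ⟨u, hu⟩ := hU1
        have : u ∈ univ \ U := by rw [h]; exact mem_univ u
        exact (mem_sdiff.mp this).2 hu
      · rw [inArcs, Finset.filter_eq_empty_iff]
        intro a _
        simp only [mem_sdiff, mem_univ, true_and, not_not]
        intro hcon
        exact absurd (hcross a hcon.2) hcon.1
    have hτcard := hmin _ hdicut
    have hcard : (outArcs src tgt (univ \ U)).card = np + nq := by
      have hdisj : Disjoint (univ.filter P) (univ.filter Q) := by
        rw [Finset.disjoint_left]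
        intro a ha hb
        simp only [hP, hQ, mem_filter] at ha hb
        tauto
      have hun : outArcs src tgt (univ \ U) = univ.filter P ∪ univ.filter Q := by
        ext a
        simp only [outArcs, hP, hQ, mem_filter, mem_union, mem_univ, true_and,
          mem_sdiff, not_and, not_not]
        have hc := hcross a
        by_cases ho : o a <;> simp [otail, ohead, ho] <;> tauto
      rw [hun, Finset.card_union_of_disjoint hdisj]
    have hτle : (τ:ℚ) ≤ (np:ℚ) + (nq:ℚ) := by
      have : τ ≤ np + nq := hcard ▸ hτcard
      exact_mod_cast this
    -- flow bounds
    have hbal := flow_cut_balance src tgt o f hcons U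
    have hlbP : (np : ℚ) ≤ ∑ a ∈ univ.filter P, f a := by
      have := Finset.card_nsmul_le_sum (univ.filter P) f 1 (fun a _ => (hbd a).1)
      simpa using this
    have hlbQ : (nq : ℚ) ≤ ∑ a ∈ univ.filter Q, f a := by
      have := Finset.card_nsmul_le_sum (univ.filter Q) f 1 (fun a _ => (hbd a).1)
      simpa using this
    have hubP : ∑ a ∈ univ.filter P, f a ≤ (np:ℚ) * (k-1) := by
      have := Finset.sum_le_card_nsmul (univ.filter P) f (k-1) (fun a _ => (hbd a).2)
      simpa [nsmul_eq_mul] using this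
    have hubQ : ∑ a ∈ univ.filter Q, f a ≤ (nq:ℚ) * (k-1) := by
      have := Finset.sum_le_card_nsmul (univ.filter Q) f (k-1) (fun a _ => (hbd a).2)
      simpa [nsmul_eq_mul] using this
    have hPk : (τ:ℚ) ≤ k * np := by nlinarith
    have hQk : (τ:ℚ) ≤ k * nq := by nlinarith
    have hfinP : ⌊(τ:ℚ)/k⌋ ≤ (np:ℤ) := by
      have h1 : (τ:ℚ)/k ≤ ((np:ℤ):ℚ) := by
        rw [div_le_iff₀ hk0]; push_cast; linarith
      calc ⌊(τ:ℚ)/k⌋ ≤ ⌊(((np:ℤ)):ℚ)⌋ := Int.floor_le_floor h1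
        _ = (np:ℤ) := Int.floor_intCast _
    have hfinQ : ⌊(τ:ℚ)/k⌋ ≤ (nq:ℤ) := by
      have h1 : (τ:ℚ)/k ≤ ((nq:ℤ):ℚ) := by
        rw [div_le_iff₀ hk0]; push_cast; linarith
      calc ⌊(τ:ℚ)/k⌋ ≤ ⌊(((nq:ℤ)):ℚ)⌋ := Int.floor_le_floor h1
        _ = (nq:ℤ) := Int.floor_intCast _
    constructor
    · have hsum : ∑ p ∈ outArcs (asrc src tgt) (atgt src tgt) U, x p = (np : ℤ) := by
        rw [sum_outArcs_aug]
        have : (np : ℤ) = ∑ a : A, (if P a then (1:ℤ) else 0) := by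
          rw [hnp, Finset.card_filter]
          push_cast
          rfl
        rw [this]
        refine Finset.sum_congr rfl fun a _ => ?_
        have hc := hcross a
        by_cases hs : src a ∈ U <;> by_cases ht : tgt a ∈ U <;> by_cases ho : o a <;>
          simp [hxdef, hP, otail, ohead, hs, ht, ho] <;> tauto
      rw [hsum]; exact hfinP
    · have hsum : ∑ p ∈ outArcs (asrc src tgt) (atgt src tgt) U,
          ((if p.2 then (τ:ℤ) else 1) - x p) = (nq : ℤ) := by
        rw [sum_outArcs_aug]
        have : (nq : ℤ) = ∑ a : A, (if Q a then (1:ℤ) else 0) := by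
          rw [hnq, Finset.card_filter]
          push_cast
          rfl
        rw [this]
        refine Finset.sum_congr rfl fun a _ => ?_
        have hc := hcross a
        by_cases hs : src a ∈ U <;> by_cases ht : tgt a ∈ U <;> by_cases ho : o a <;>
          simp [hxdef, hQ, otail, ohead, hs, ht, ho] <;> tauto
      rw [hsum]; exact hfinQ
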